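/- If a query interval [s,t] contains two distinct MUPSs of S, then there is no SUPS for [s,t]. -/

import Mathlib

/-- `sub S i j` is the substring `S[i..j]`, 1-indexed and inclusive. -/
def sub (S : List Char) (i j : ℕ) : List Char := (S.drop (i-1)).take (j+1-i)

/-- A string is a palindrome if it equals its reversal. -/
def isPal (w : List Char) : Prop := w.reverse = w

/-- The set of (1-indexed) occurrence positions of `w` in `S`. -/
def occs (S w : List Char) : Finset ℕ :=
  (Finset.Icc 1 S.length).filter (fun p => sub S p (p + w.length - 1) = w)

/-- `w` occurs exactly once in `S`. -/
def uniqueIn (S w : List Char) : Prop := (occs S w).card = 1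

/-- `[i,j]` is (the interval of) a unique palindromic substring of `S`. -/
def UPS (S : List Char) (i j : ℕ) : Prop :=
  1 ≤ i ∧ i ≤ j ∧ j ≤ S.length ∧ isPal (sub S i j) ∧ uniqueIn S (sub S i j)

/-- `[i,j]` is a minimal unique palindromic substring of `S`. -/
def MUPS (S : List Char) (i j : ℕ) : Prop :=
  UPS S i j ∧ (j + 1 - i ≤ 2 ∨ 2 ≤ (occs S (sub S (i+1) (j-1))).card)

/-- `[i,j]` is a shortest unique palindromic substring of `S` for the query `[s,t]`. -/
def SUPS (S : List Char) (s t i j : ℕ) : Prop :=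
  UPS S i j ∧ i ≤ s ∧ s ≤ t ∧ t ≤ j ∧
    ∀ i' j', UPS S i' j' → i' ≤ s → t ≤ j' → j - i ≤ j' - i'

lemma length_sub (S : List Char) {i j : ℕ} (hi : 1 ≤ i) (hj : j ≤ S.length) :
    (sub S i j).length = j + 1 - i := by
  simp [sub]; omega

lemma subSub (S : List Char) {a b x y : ℕ} (ha : 1 ≤ a) (hax : a ≤ x) (hyb : y ≤ b) :
    sub S x y = List.take (y+1-x) (List.drop (x-a) (sub S a b)) := by
  unfold sub
  rw [List.drop_take, List.take_take, List.drop_drop]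
  have h1 : (y+1-x) ⊓ ((b+1-a)-(x-a)) = y+1-x := by omega
  have h2 : a-1+(x-a) = x-1 := by omega
  rw [h1, h2]

lemma mem_occs {S w : List Char} {p : ℕ} :
    p ∈ occs S w ↔ 1 ≤ p ∧ p ≤ S.length ∧ List.take w.length (S.drop (p-1)) = w := by
  rw [occs, Finset.mem_filter, Finset.mem_Icc]; simp only [sub]
  constructor
  · rintro ⟨⟨h1, h2⟩, h3⟩
    refine ⟨h1, h2, ?_⟩
    rwa [show p + w.length - 1 + 1 - p = w.length from by omega] at h3
  · rintro ⟨h1, h2, h3⟩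
    refine ⟨⟨h1, h2⟩, ?_⟩
    rwa [show p + w.length - 1 + 1 - p = w.length from by omega]

lemma occ_self {S : List Char} {x y : ℕ} (hx : 1 ≤ x) (hxy : x ≤ y) (hy : y ≤ S.length) :
    x ∈ occs S (sub S x y) := by
  rw [mem_occs]
  refine ⟨hx, le_trans hxy hy, ?_⟩
  rw [length_sub S hx hy]; rfl

lemma occ_len_le {S w : List Char} {p : ℕ} (h : p ∈ occs S w) :
    p - 1 + w.length ≤ S.length := by
  rw [mem_occs] at h
  obtain ⟨h1, h2, h3⟩ := h
  have := congrArg List.length h3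
  simp [List.length_take] at this
  omega
lemma occ_mono {S : List Char} {a b x y p : ℕ} (ha : 1 ≤ a) (hax : a ≤ x) (hxy : x ≤ y)
    (hyb : y ≤ b) (hb : b ≤ S.length) (hp : p ∈ occs S (sub S a b)) :
    p + (x - a) ∈ occs S (sub S x y) := by
  have hlw : (sub S a b).length = b + 1 - a := length_sub S ha hb
  have hlen := occ_len_le hp
  rw [mem_occs] at hp ⊢
  obtain ⟨hp1, hp2, hp3⟩ := hp
  rw [hlw] at hp3 hlen
  have hlv : (sub S x y).length = y + 1 - x :=
    length_sub S (by omega) (by omega)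
  refine ⟨by omega, by omega, ?_⟩
  rw [hlv]
  have h1 : sub S x y = List.take (y+1-x) (List.drop (x-a) (sub S a b)) := subSub S ha hax hyb
  rw [h1, ← hp3, List.drop_take, List.take_take, List.drop_drop]
  have e1 : (y+1-x) ⊓ ((b+1-a)-(x-a)) = y+1-x := by omega
  have e2 : p-1+(x-a) = p+(x-a)-1 := by omega
  rw [e1, e2]

lemma card_ge {S : List Char} {a b x y : ℕ} (ha : 1 ≤ a) (hax : a ≤ x) (hxy : x ≤ y)
    (hyb : y ≤ b) (hb : b ≤ S.length) :
    (occs S (sub S a b)).card ≤ (occs S (sub S x y)).card := by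
  apply Finset.card_le_card_of_injOn (fun p => p + (x - a))
  · intro p hp
    exact occ_mono ha hax hxy hyb hb hp
  · intro p _ q _ h
    simpa using h

lemma list_mirror {α : Type*} (W : List α) (hW : W.reverse = W) (k m : ℕ)
    (hkm : k + m ≤ W.length) :
    ((W.drop k).take m).reverse = (W.drop (W.length - k - m)).take m := by
  rw [List.reverse_take, List.reverse_drop, hW, List.length_drop,
    List.drop_take]
  congr 1
  omega

lemma mirror {S : List Char} {i j x y : ℕ} (hi : 1 ≤ i) (hix : i ≤ x) (hxy : x ≤ y)
    (hyj : y ≤ j) (hj : j ≤ S.length) (hP : isPal (sub S i j)) (hv : isPal (sub S x y)) :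
    (i + j - y) ∈ occs S (sub S x y) := by
  set W := sub S i j with hWdef
  have hWlen : W.length = j + 1 - i := length_sub S hi hj
  set p := i + j - y with hpdef
  have hlv : (sub S x y).length = y + 1 - x := length_sub S (by omega) (by omega)
  rw [mem_occs]
  refine ⟨by omega, by omega, ?_⟩
  rw [hlv]
  -- take (y+1-x) (drop (p-1) S) = sub S p (p + (y+1-x) - 1)
  have hq : List.take (y+1-x) (S.drop (p-1)) = sub S p (i + j - x) := by
    unfold sub
    congr 1
    omega
  rw [hq]
  have h2 : sub S p (i + j - x) = List.take (y+1-x) (List.drop (p-i) W) := by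
    have := subSub S (a := i) (b := j) (x := p) (y := i + j - x) hi (by omega) (by omega)
    rw [this]
    congr 1
    omega
  have h3 : sub S x y = List.take (y+1-x) (List.drop (x-i) W) := by
    have := subSub S (a := i) (b := j) (x := x) (y := y) hi hix hyj
    rw [this]
  have h4 := list_mirror W hP (x - i) (y+1-x) (by omega)
  rw [h2, show p - i = W.length - (x-i) - (y+1-x) from by omega, ← h4, ← h3, hv]
lemma center {S : List Char} {i j x y : ℕ} (hups : UPS S i j) (hix : i ≤ x) (hxy : x ≤ y)
    (hyj : y ≤ j) (hPal : isPal (sub S x y)) (hu : uniqueIn S (sub S x y)) :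
    x + y = i + j := by
  obtain ⟨hi1, hij, hjS, hP, _⟩ := hups
  have hx1 : 1 ≤ x := le_trans hi1 hix
  have hm := mirror hi1 hix hxy hyj hjS hP hPal
  have hs := occ_self hx1 hxy (le_trans hyj hjS)
  rw [uniqueIn, Finset.card_eq_one] at hu
  obtain ⟨a, ha⟩ := hu
  rw [ha, Finset.mem_singleton] at hm hs
  omega

lemma key {S : List Char} {x1 y1 x2 y2 : ℕ} (h1 : MUPS S x1 y1) (h2 : MUPS S x2 y2)
    (hcent : x1 + y1 = x2 + y2) (hlt : x2 < x1) : False := by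
  obtain ⟨⟨ha1, ha2, ha3, _, ha5⟩, _⟩ := h1
  obtain ⟨⟨hb1, hb2, hb3, _, _⟩, hmin⟩ := h2
  rcases hmin with hshort | hmany
  · omega
  · have := card_ge (S := S) (a := x2 + 1) (b := y2 - 1) (x := x1) (y := y1)
      (by omega) (by omega) ha2 (by omega) (by omega)
    rw [uniqueIn] at ha5
    omega

theorem stmt7 (S : List Char) (s t x1 y1 x2 y2 : ℕ)
    (h1 : MUPS S x1 y1) (h2 : MUPS S x2 y2) (hne : (x1, y1) ≠ (x2, y2))
    (hc1 : s ≤ x1 ∧ y1 ≤ t) (hc2 : s ≤ x2 ∧ y2 ≤ t) :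
    ¬ ∃ i j, SUPS S s t i j := by
  rintro ⟨i, j, hups, his, hst, htj, -⟩
  have c1 : x1 + y1 = i + j :=
    center hups (by omega) h1.1.2.1 (by omega) h1.1.2.2.2.1 h1.1.2.2.2.2
  have c2 : x2 + y2 = i + j :=
    center hups (by omega) h2.1.2.1 (by omega) h2.1.2.2.2.1 h2.1.2.2.2.2
  have hcent : x1 + y1 = x2 + y2 := by omega
  have hxy1 := h1.1.2.1
  have hxy2 := h2.1.2.1
  have hx12 : x1 ≠ x2 := by
    intro h
    exact hne (by simp [Prod.ext_iff]; omega)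
  rcases lt_or_gt_of_ne hx12 with h | h
  · exact key h2 h1 hcent.symm h
  · exact key h1 h2 hcent h
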